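/- arXiv:2001.06116 — 3 statements merged into one kernel-verified Lean document; each statement's English description precedes it below -/
import Mathlib

section
/- Let V : ℝⁿ → ℝ be continuously differentiable, let α, ε, M > 0 be constants with ε‖x‖² ≤ V(x) ≤ M‖x‖² for all x ∈ ℝⁿ, and suppose ∇V(x) ≠ 0 for all x ≠ 0. Let f̂ : ℝⁿ → ℝⁿ be any function and define the projected dynamics f(x) = f̂(x) − ∇V(x) · ReLU(⟨∇V(x), f̂(x)⟩ + α V(x)) / ‖∇V(x)‖² for x with ∇V(x) ≠ 0, and f(x) = f̂(x) otherwise. Then any differentiable trajectory x : ℝ → ℝⁿ satisfying x'(t) = f(x(t)) for all t ≥ 0 obeys ‖x(t)‖ ≤ √(M/ε) · ‖x(0)‖ · e^{−αt/2} for all t ≥ 0; that is, the dynamics ẋ = f(x) are globally exponentially stable to the equilibrium point x = 0. -/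
open RealInnerProductSpace

/-- the projected dynamics
`f(x) = f̂(x) − ∇V(x) · ReLU(⟨∇V(x), f̂(x)⟩ + α V(x)) / ‖∇V(x)‖²`
(when `∇V(x) ≠ 0`, and `f̂(x)` otherwise) are globally exponentially stable:
any differentiable trajectory with `x' = f(x)` on `t ≥ 0` satisfies
`‖x(t)‖ ≤ √(M/ε) ‖x(0)‖ e^{−αt/2}`. -/
theorem projected_dynamics_globally_exponentially_stable
    {n : ℕ} (V : EuclideanSpace ℝ (Fin n) → ℝ) (hV : ContDiff ℝ 1 V)
    (α ε M : ℝ) (hα : 0 < α) (hε : 0 < ε) (hM : 0 < M)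
    (hlow : ∀ x, ε * ‖x‖ ^ 2 ≤ V x) (hup : ∀ x, V x ≤ M * ‖x‖ ^ 2)
    (hgradne : ∀ x, x ≠ 0 → gradient V x ≠ 0)
    (fhat f : EuclideanSpace ℝ (Fin n) → EuclideanSpace ℝ (Fin n))
    (hf : ∀ x, gradient V x ≠ 0 →
      f x = fhat x -
        (max (⟪gradient V x, fhat x⟫ + α * V x) 0 / ‖gradient V x‖ ^ 2) • gradient V x)
    (hf0 : ∀ x, gradient V x = 0 → f x = fhat x)
    (x : ℝ → EuclideanSpace ℝ (Fin n)) (hx : Differentiable ℝ x)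
    (hdyn : ∀ t, 0 ≤ t → deriv x t = f (x t)) :
    ∀ t, 0 ≤ t → ‖x t‖ ≤ Real.sqrt (M / ε) * ‖x 0‖ * Real.exp (-α * t / 2) := by
  -- Key pointwise inequality: ⟪∇V y, f y⟫ ≤ -α V y
  have key : ∀ y, ⟪gradient V y, f y⟫ ≤ -α * V y := by
    intro y
    by_cases hg : gradient V y = 0
    · have hy0 : y = 0 := by
        by_contra h; exact hgradne y h hg
      have h1 := hlow 0
      have h2 := hup 0
      simp only [norm_zero] at h1 h2
      rw [hf0 y hg, hg, inner_zero_left, hy0]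
      nlinarith
    · have hn : ‖gradient V y‖ ^ 2 ≠ 0 := pow_ne_zero 2 (norm_ne_zero_iff.mpr hg)
      rw [hf y hg, inner_sub_right, real_inner_smul_right, real_inner_self_eq_norm_sq]
      set s := ⟪gradient V y, fhat y⟫ with hs
      have hc : max (s + α * V y) 0 / ‖gradient V y‖ ^ 2 * ‖gradient V y‖ ^ 2
          = max (s + α * V y) 0 := div_mul_cancel₀ _ hn
      rw [hc]
      linarith [le_max_left (s + α * V y) (0 : ℝ)]
  -- derivative of t ↦ V (x t)
  have hW : ∀ t : ℝ, HasDerivAt (fun s => V (x s)) ⟪gradient V (x t), deriv x t⟫ t := by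
    intro t
    have h1 := ((hV.differentiable one_ne_zero) (x t)).hasGradientAt
    have h2 := h1.hasFDerivAt.comp_hasDerivAt t (hx t).hasDerivAt
    rw [InnerProductSpace.toDual_apply_apply] at h2
    exact h2
  set g : ℝ → ℝ := fun t => V (x t) * Real.exp (α * t) with hgdef
  have hgderiv : ∀ t : ℝ, HasDerivAt g
      (⟪gradient V (x t), deriv x t⟫ * Real.exp (α * t)
        + V (x t) * (Real.exp (α * t) * α)) t := by
    intro t
    have he : HasDerivAt (fun s : ℝ => Real.exp (α * s)) (Real.exp (α * t) * α) t := by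
      simpa [Function.comp_def] using (Real.hasDerivAt_exp (α * t)).comp t ((hasDerivAt_id t).const_mul α)
    exact (hW t).mul he
  have hgdiff : Differentiable ℝ g := fun t => (hgderiv t).differentiableAt
  have hanti : AntitoneOn g (Set.Ici (0 : ℝ)) := by
    apply antitoneOn_of_deriv_nonpos (convex_Ici 0) (hgdiff.continuous.continuousOn)
      (hgdiff.differentiableOn.mono interior_subset)
    intro t ht
    rw [interior_Ici] at ht
    rw [(hgderiv t).deriv, hdyn t (le_of_lt ht)]
    have hk := key (x t)
    have hexp := (Real.exp_pos (α * t)).le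
    nlinarith [mul_nonpos_of_nonpos_of_nonneg
      (show ⟪gradient V (x t), f (x t)⟫ + α * V (x t) ≤ 0 by linarith) hexp]
  intro t ht
  have hgle : g t ≤ g 0 := hanti (Set.self_mem_Ici) ht ht
  have hVt : V (x t) * Real.exp (α * t) ≤ V (x 0) := by
    simpa [hgdef] using hgle
  have hexppos := Real.exp_pos (α * t)
  have hVbound : ε * ‖x t‖ ^ 2 ≤ M * ‖x 0‖ ^ 2 * Real.exp (-α * t) := by
    have h1 := hlow (x t)
    have h2 := hup (x 0)
    have hexpinv : Real.exp (-α * t) = (Real.exp (α * t))⁻¹ := by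
      rw [← Real.exp_neg]; ring_nf
    rw [hexpinv, ← div_eq_mul_inv, le_div_iff₀ hexppos]
    nlinarith
  have hsq : ‖x t‖ ^ 2 ≤ (Real.sqrt (M / ε) * ‖x 0‖ * Real.exp (-α * t / 2)) ^ 2 := by
    have hMε : (0 : ℝ) ≤ M / ε := by positivity
    have hexp2 : Real.exp (-α * t / 2) ^ 2 = Real.exp (-α * t) := by
      rw [sq, ← Real.exp_add]; ring_nf
    have : (Real.sqrt (M / ε) * ‖x 0‖ * Real.exp (-α * t / 2)) ^ 2
        = (M / ε) * ‖x 0‖ ^ 2 * Real.exp (-α * t) := by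
      rw [mul_pow, mul_pow, Real.sq_sqrt hMε, hexp2]
    rw [this]
    rw [div_mul_eq_mul_div, div_mul_eq_mul_div, le_div_iff₀ hε]
    nlinarith
  calc ‖x t‖ = Real.sqrt (‖x t‖ ^ 2) := (Real.sqrt_sq (norm_nonneg _)).symm
    _ ≤ Real.sqrt ((Real.sqrt (M / ε) * ‖x 0‖ * Real.exp (-α * t / 2)) ^ 2) :=
        Real.sqrt_le_sqrt hsq
    _ = Real.sqrt (M / ε) * ‖x 0‖ * Real.exp (-α * t / 2) :=
        Real.sqrt_sq (by positivity)
end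

section
/- Let V : ℝⁿ → ℝ be differentiable, α ≥ 0, and f̂ : ℝⁿ → ℝⁿ. For any x ∈ ℝⁿ with ∇V(x) ≠ 0 and V(x) ≥ 0, the projected vector f(x) = f̂(x) − ∇V(x) · ReLU(⟨∇V(x), f̂(x)⟩ + α V(x)) / ‖∇V(x)‖² satisfies the Lyapunov decrease condition ⟨∇V(x), f(x)⟩ ≤ −α V(x). -/
open RealInnerProductSpace

/-- the projected vector satisfies the Lyapunov decrease condition
`⟨∇V(x), f(x)⟩ ≤ −α V(x)`. -/
theorem projected_vector_satisfies_decrease_condition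
    {n : ℕ} (V : EuclideanSpace ℝ (Fin n) → ℝ) (hV : Differentiable ℝ V)
    (α : ℝ) (hα : 0 ≤ α)
    (fhat : EuclideanSpace ℝ (Fin n) → EuclideanSpace ℝ (Fin n))
    (x : EuclideanSpace ℝ (Fin n))
    (hgrad : gradient V x ≠ 0) (hVx : 0 ≤ V x) :
    ⟪gradient V x,
      fhat x -
        (max (⟪gradient V x, fhat x⟫ + α * V x) 0 / ‖gradient V x‖ ^ 2) •
          gradient V x⟫ ≤ -α * V x := by
  set g := gradient V x
  have hg : ‖g‖ ^ 2 ≠ 0 := pow_ne_zero _ (norm_ne_zero_iff.mpr hgrad)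
  rw [inner_sub_right, inner_smul_right, real_inner_self_eq_norm_sq,
    div_mul_cancel₀ _ hg]
  rcases le_or_gt (⟪g, fhat x⟫ + α * V x) 0 with h | h
  · rw [max_eq_right h]; linarith
  · rw [max_eq_left h.le]; linarith
end

section
/- Let k ≥ 1, and consider the input-convex neural network (ICNN) g : ℝⁿ → ℝ^{m_k} defined by the recurrence z₁(x) = σ₀(W₀ x + b₀) and z_{i+1}(x) = σ_i(U_i z_i(x) + W_i x + b_i) for i = 1, …, k−1, with g(x) = z_k(x), where each W_i is a real matrix, each b_i a real vector, each U_i a matrix with all entries nonnegative, and each σ_i : ℝ → ℝ is convex and monotonically nondecreasing, applied componentwise. Then every component of g is a convex function of x on ℝⁿ. -/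
private lemma myComp {E : Type*} [AddCommMonoid E] [Module ℝ E]
    (σ : ℝ → ℝ) (hc : ConvexOn ℝ Set.univ σ) (hm : Monotone σ)
    {f : E → ℝ} (hf : ConvexOn ℝ Set.univ f) :
    ConvexOn ℝ Set.univ (fun x => σ (f x)) := by
  refine ⟨convex_univ, fun x _ y _ a b ha hb hab => ?_⟩
  calc σ (f (a • x + b • y)) ≤ σ (a * f x + b * f y) := by
        apply hm
        simpa using hf.2 (Set.mem_univ x) (Set.mem_univ y) ha hb hab
    _ ≤ a * σ (f x) + b * σ (f y) := by
        simpa using hc.2 (Set.mem_univ (f x)) (Set.mem_univ (f y)) ha hb hab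

private lemma mySum {E : Type*} [AddCommMonoid E] [Module ℝ E]
    {ι : Type*} (s : Finset ι) (f : ι → E → ℝ)
    (hf : ∀ i ∈ s, ConvexOn ℝ Set.univ (f i)) :
    ConvexOn ℝ Set.univ (fun x => ∑ i ∈ s, f i x) := by
  classical
  induction s using Finset.induction_on with
  | empty => simpa using convexOn_const 0 convex_univ
  | @insert i s hi ih =>
    simp only [Finset.sum_insert hi]
    exact (hf i (Finset.mem_insert_self i s)).add
      (ih fun j hj => hf j (Finset.mem_insert_of_mem hj))

private lemma myAffine {n p : ℕ} (M : Matrix (Fin p) (Fin n) ℝ) (c : ℝ) (j : Fin p) :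
    ConvexOn ℝ Set.univ (fun x : Fin n → ℝ => Matrix.mulVec M x j + c) := by
  refine ⟨convex_univ, fun x _ y _ a b ha hb hab => ?_⟩
  simp only [Matrix.mulVec_add, Matrix.mulVec_smul, Pi.add_apply, Pi.smul_apply,
    smul_eq_mul]
  have h2 : a * (Matrix.mulVec M x j + c) + b * (Matrix.mulVec M y j + c)
      = a * Matrix.mulVec M x j + b * Matrix.mulVec M y j + (a + b) * c := by ring
  rw [h2, hab, one_mul]

/-- every component of an input-convex neural network (ICNN), with
nonnegative `U` weights and convex nondecreasing scalar activations applied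
componentwise, is a convex function of the input. -/
theorem icnn_components_convex
    {n k : ℕ} (hk : 1 ≤ k) (m : ℕ → ℕ)
    (W : ∀ i : ℕ, Matrix (Fin (m (i + 1))) (Fin n) ℝ)
    (U : ∀ i : ℕ, Matrix (Fin (m (i + 1))) (Fin (m i)) ℝ)
    (b : ∀ i : ℕ, Fin (m (i + 1)) → ℝ)
    (σ : ℕ → ℝ → ℝ)
    (hσconv : ∀ i, ConvexOn ℝ Set.univ (σ i))
    (hσmono : ∀ i, Monotone (σ i))
    (hU : ∀ i p q, 0 ≤ U i p q)
    (z : ∀ i : ℕ, (Fin n → ℝ) → Fin (m i) → ℝ)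
    (hz1 : ∀ x j, z 1 x j = σ 0 ((Matrix.mulVec (W 0) x + b 0) j))
    (hz : ∀ i, 1 ≤ i → ∀ x j,
      z (i + 1) x j =
        σ i ((Matrix.mulVec (U i) (z i x) + Matrix.mulVec (W i) x + b i) j)) :
    ∀ j : Fin (m k), ConvexOn ℝ Set.univ (fun x : Fin n → ℝ => z k x j) := by
  induction k with
  | zero => omega
  | succ i ih =>
    intro j
    rcases Nat.eq_or_lt_of_le hk with h1 | h1
    · -- i = 0
      have hi0 : i = 0 := by omega
      subst hi0
      have heq : (fun x : Fin n → ℝ => z 1 x j)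
          = fun x => σ 0 (Matrix.mulVec (W 0) x j + b 0 j) := by
        funext x; simpa [Pi.add_apply] using hz1 x j
      rw [heq]
      exact myComp _ (hσconv 0) (hσmono 0) (myAffine (W 0) (b 0 j) j)
    · have hi : 1 ≤ i := by omega
      have heq : (fun x : Fin n → ℝ => z (i + 1) x j)
          = fun x => σ i ((∑ q, U i j q * z i x q)
              + (Matrix.mulVec (W i) x j + b i j)) := by
        funext x
        rw [hz i hi x j]
        simp [Matrix.mulVec, dotProduct, add_assoc]
      rw [heq]
      refine myComp _ (hσconv i) (hσmono i) ?_
      refine ConvexOn.add ?_ (myAffine (W i) (b i j) j)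
      exact mySum Finset.univ _ fun q _ => (ih hi q).smul (hU i j q)
end
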